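/- Let α ∈ P be a Laurent polynomial that is not a constant. Define ϖ : W → W by ϖ(f,g) = (−g, (α+D)f). Then ϖ is an injective ℂ-linear map whose image is P × (α+D)(P), and for all m ∈ ℤ it satisfies ϖ ∘ L_m^{(α,0)} = L_m^{(α,1/2)} ∘ ϖ and ϖ ∘ G_m^{(α,0)} = G_m^{(α,1/2)} ∘ ϖ, where L_m^{(α,b)}, G_m^{(α,b)} denote the operators of M_{α,b}. Consequently ϖ is a parity-reversing isomorphism from M_{α,0} onto the submodule (P, (α+D)(P)) of M_{α,1/2}. -/

import Mathlib

/- STATEMENT 7: For α ∈ ℂ[t,t⁻¹] non-constant, ϖ(f,g) = (−g, (α+D)f) is an injective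
ℂ-linear map with image P × (α+D)(P), intertwining the operators of M_{α,0} with those
of M_{α,1/2}: ϖ ∘ L_m^{(α,0)} = L_m^{(α,1/2)} ∘ ϖ and ϖ ∘ G_m^{(α,0)} = G_m^{(α,1/2)} ∘ ϖ.
Hence ϖ is a parity-reversing isomorphism from M_{α,0} onto the submodule
(P, (α+D)(P)) of M_{α,1/2}. -/

open LaurentPolynomial

noncomputable section

abbrev Lp := LaurentPolynomial ℂ

/-- `L_m(f,g) = (t^m(α+D+mb)f, t^m(α+D+m(b+1/2))g)` -/
def Lop (D : Lp →ₗ[ℂ] Lp) (α : Lp) (b : ℂ) (m : ℤ) : Lp × Lp → Lp × Lp :=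
  fun w => (T m * (α * w.1 + D w.1 + ((m : ℂ) * b) • w.1),
            T m * (α * w.2 + D w.2 + ((m : ℂ) * (b + 1 / 2)) • w.2))

/-- `G_m(f,g) = (−t^m g, t^m(α+D+2mb)f)` -/
def Gop (D : Lp →ₗ[ℂ] Lp) (α : Lp) (b : ℂ) (m : ℤ) : Lp × Lp → Lp × Lp :=
  fun w => (-(T m * w.2), T m * (α * w.1 + D w.1 + (2 * (m : ℂ) * b) • w.1))

/-- `ϖ(f,g) = (−g, (α+D)f)` -/
def varpi (D : Lp →ₗ[ℂ] Lp) (α : Lp) : Lp × Lp → Lp × Lp :=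
  fun w => (-w.2, α * w.1 + D w.1)


lemma T_def (n : ℤ) : (T n : Lp) = AddMonoidAlgebra.single n 1 := rfl

lemma Dapp (D : Lp →ₗ[ℂ] Lp) (hD : ∀ n : ℤ, D (T n) = (n : ℂ) • T n)
    (f : Lp) (k : ℤ) : (D f).coeff k = (k : ℂ) * f.coeff k := by
  induction f using AddMonoidAlgebra.induction_linear with
  | zero => simp
  | add f g hf hg =>
      rw [map_add, AddMonoidAlgebra.coeff_add, AddMonoidAlgebra.coeff_add, Finsupp.add_apply, Finsupp.add_apply, hf, hg]; ring
  | single n c =>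
      have e : (AddMonoidAlgebra.single n c : Lp) = c • T n := by
        rw [T_def, AddMonoidAlgebra.smul_single, smul_eq_mul, mul_one]
      rw [e, map_smul, hD]
      rw [AddMonoidAlgebra.coeff_smul_apply, AddMonoidAlgebra.coeff_smul_apply, AddMonoidAlgebra.coeff_smul_apply, T_apply,
        smul_eq_mul, smul_eq_mul, smul_eq_mul]
      rcases eq_or_ne n k with h | h
      · rw [if_pos h, h]; ring
      · rw [if_neg h]; ring

lemma Tmul_app (m k : ℤ) (g : Lp) : (T m * g : Lp).coeff k = g.coeff (k - m) := by
  rw [T_def, AddMonoidAlgebra.coeff_single_mul_apply, one_mul, neg_add_eq_sub]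

lemma Dshift (D : Lp →ₗ[ℂ] Lp) (hD : ∀ n : ℤ, D (T n) = (n : ℂ) • T n)
    (m : ℤ) (h : Lp) : D (T m * h) = (m : ℂ) • (T m * h) + T m * D h := by
  ext k
  rw [AddMonoidAlgebra.coeff_add, Finsupp.add_apply, AddMonoidAlgebra.coeff_smul_apply, Dapp D hD, Tmul_app, Tmul_app,
    Dapp D hD, smul_eq_mul]
  push_cast
  ring

lemma csmul (c : ℂ) (x : Lp) : c • x = C c * x := by
  rw [C_eq_algebraMap, Algebra.smul_def]

lemma mul_apply_max (f g : Lp) {a b : ℤ} (ha : ∀ x ∈ f.coeff.support, x ≤ a)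
    (hb : ∀ x ∈ g.coeff.support, x ≤ b) : (f * g).coeff (a + b) = f.coeff a * g.coeff b := by
  classical
  rw [AddMonoidAlgebra.coeff_mul]
  rw [Finsupp.sum, Finset.sum_eq_single a]
  · rw [Finsupp.sum, Finset.sum_eq_single b]
    · simp
    · intro y hy hne
      have : a + y ≠ a + b := fun he => hne (by omega)
      simp [this]
    · intro hb'
      simp [Finsupp.notMem_support_iff.1 hb']
  · intro x hx hne
    rw [Finsupp.sum, Finset.sum_eq_zero]
    intro y hy
    have hx' := ha x hx
    have hy' := hb y hy
    have : x + y ≠ a + b := fun he => hne (by omega)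
    simp [this]
  · intro ha'
    simp [Finsupp.notMem_support_iff.1 ha', Finsupp.sum]

lemma mul_apply_min (f g : Lp) {a b : ℤ} (ha : ∀ x ∈ f.coeff.support, a ≤ x)
    (hb : ∀ x ∈ g.coeff.support, b ≤ x) : (f * g).coeff (a + b) = f.coeff a * g.coeff b := by
  classical
  rw [AddMonoidAlgebra.coeff_mul]
  rw [Finsupp.sum, Finset.sum_eq_single a]
  · rw [Finsupp.sum, Finset.sum_eq_single b]
    · simp
    · intro y hy hne
      have : a + y ≠ a + b := fun he => hne (by omega)
      simp [this]
    · intro hb'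
      simp [Finsupp.notMem_support_iff.1 hb']
  · intro x hx hne
    rw [Finsupp.sum, Finset.sum_eq_zero]
    intro y hy
    have hx' := ha x hx
    have hy' := hb y hy
    have : x + y ≠ a + b := fun he => hne (by omega)
    simp [this]
  · intro ha'
    simp [Finsupp.notMem_support_iff.1 ha', Finsupp.sum]

lemma keyinj (D : Lp →ₗ[ℂ] Lp) (hD : ∀ n : ℤ, D (T n) = (n : ℂ) • T n)
    (α : Lp) (hα : ∀ c : ℂ, α ≠ C c) (f : Lp) (hf : α * f + D f = 0) : f = 0 := by
  classical
  by_contra hf0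
  have hα0 : α ≠ 0 := fun h => hα 0 (by simpa using h)
  have hαs : α.coeff.support.Nonempty := Finsupp.support_nonempty_iff.2 (fun h => hα0 (AddMonoidAlgebra.coeff_eq_zero.1 h))
  have hfs : f.coeff.support.Nonempty := Finsupp.support_nonempty_iff.2 (fun h => hf0 (AddMonoidAlgebra.coeff_eq_zero.1 h))
  obtain ⟨n, hn, hn0⟩ : ∃ n ∈ α.coeff.support, n ≠ 0 := by
    by_contra hpush
    push_neg at hpush
    apply hα (α.coeff 0)
    rw [← single_eq_C]
    ext k
    rcases eq_or_ne k 0 with rfl | hk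
    · simp [AddMonoidAlgebra.coeff_single, Finsupp.single_apply]
    · have : k ∉ α.coeff.support := fun h => hk (hpush k h)
      rw [Finsupp.notMem_support_iff.1 this, AddMonoidAlgebra.coeff_single, Finsupp.single_apply, if_neg (by omega)]
  have hcoef : ∀ k : ℤ, (α * f).coeff k + (k : ℂ) * f.coeff k = 0 := by
    intro k
    have := congrArg (fun p : Lp => p.coeff k) hf
    rwa [AddMonoidAlgebra.coeff_add, Finsupp.add_apply, Dapp D hD, AddMonoidAlgebra.coeff_zero, Finsupp.zero_apply] at this
  rcases lt_or_ge 0 (α.coeff.support.max' hαs) with hA | hA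
  · set A := α.coeff.support.max' hαs with hAdef
    set N := f.coeff.support.max' hfs with hNdef
    have h1 : (α * f).coeff (A + N) = α.coeff A * f.coeff N :=
      mul_apply_max α f (fun x hx => α.coeff.support.le_max' x hx)
        (fun x hx => f.coeff.support.le_max' x hx)
    have h2 : f.coeff (A + N) = 0 := by
      apply Finsupp.notMem_support_iff.1
      intro hmem
      have := f.coeff.support.le_max' _ hmem
      omega
    have := hcoef (A + N)
    rw [h1, h2, mul_zero, add_zero, mul_eq_zero] at this
    rcases this with h | h
    · exact Finsupp.mem_support_iff.1 (α.coeff.support.max'_mem hαs) h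
    · exact Finsupp.mem_support_iff.1 (f.coeff.support.max'_mem hfs) h
  · set B := α.coeff.support.min' hαs with hBdef
    have hB : B < 0 := by
      have h1 := α.coeff.support.min'_le n hn
      have h2 := α.coeff.support.le_max' n hn
      omega
    set M := f.coeff.support.min' hfs with hMdef
    have h1 : (α * f).coeff (B + M) = α.coeff B * f.coeff M :=
      mul_apply_min α f (fun x hx => α.coeff.support.min'_le x hx)
        (fun x hx => f.coeff.support.min'_le x hx)
    have h2 : f.coeff (B + M) = 0 := by
      apply Finsupp.notMem_support_iff.1
      intro hmem
      have := f.coeff.support.min'_le _ hmem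
      omega
    have := hcoef (B + M)
    rw [h1, h2, mul_zero, add_zero, mul_eq_zero] at this
    rcases this with h | h
    · exact Finsupp.mem_support_iff.1 (α.coeff.support.min'_mem hαs) h
    · exact Finsupp.mem_support_iff.1 (f.coeff.support.min'_mem hfs) h


theorem stmt7 (D : Lp →ₗ[ℂ] Lp)
    (hD : ∀ n : ℤ, D (T n) = (n : ℂ) • T n)
    (α : Lp) (hα : ∀ c : ℂ, α ≠ C c) :
    IsLinearMap ℂ (varpi D α) ∧
    Function.Injective (varpi D α) ∧
    Set.range (varpi D α)
      = {w : Lp × Lp | w.2 ∈ LinearMap.range (LinearMap.mulLeft ℂ α + D)} ∧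
    (∀ m : ℤ, ∀ w : Lp × Lp,
      varpi D α (Lop D α 0 m w) = Lop D α (1 / 2) m (varpi D α w)) ∧
    (∀ m : ℤ, ∀ w : Lp × Lp,
      varpi D α (Gop D α 0 m w) = Gop D α (1 / 2) m (varpi D α w)) := by
  refine ⟨?_, ?_, ?_, ?_, ?_⟩
  · constructor
    · intro x y
      simp only [varpi, Prod.fst_add, Prod.snd_add, Prod.mk_add_mk, map_add, mul_add]
      refine Prod.ext ?_ ?_ <;> dsimp <;> ring
    · intro c x
      simp only [varpi, Prod.smul_fst, Prod.smul_snd, Prod.smul_mk, map_smul]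
      simp only [csmul]
      refine Prod.ext ?_ ?_ <;> dsimp <;> ring
  · intro a b h
    have h1 : a.2 = b.2 := by
      have := congrArg Prod.fst h
      simpa [varpi] using this
    have h2 : α * a.1 + D a.1 = α * b.1 + D b.1 := by
      have := congrArg Prod.snd h
      simpa [varpi] using this
    have h3 : a.1 - b.1 = 0 := by
      apply keyinj D hD α hα
      rw [mul_sub, map_sub]
      linear_combination h2
    exact Prod.ext (by linear_combination (norm := abel) h3) h1
  · ext w
    simp only [Set.mem_range, Set.mem_setOf_eq, LinearMap.mem_range]
    constructor
    · rintro ⟨v, rfl⟩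
      exact ⟨v.1, by simp [varpi, LinearMap.add_apply, LinearMap.mulLeft_apply]⟩
    · rintro ⟨f, hf⟩
      refine ⟨(f, -w.1), Prod.ext (by simp [varpi]) ?_⟩
      rw [← hf]
      simp [varpi, LinearMap.add_apply, LinearMap.mulLeft_apply]
  · rintro m ⟨f, g⟩
    simp only [Lop, varpi, mul_zero, zero_smul, add_zero]
    rw [Dshift D hD]
    refine Prod.ext ?_ ?_ <;>
      simp only [map_add, map_neg, map_smul, mul_neg, neg_neg] <;>
      norm_num <;> simp only [csmul] <;> ring
  · rintro m ⟨f, g⟩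
    simp only [Gop, varpi, mul_zero, zero_smul, add_zero, map_neg, mul_neg]
    rw [Dshift D hD]
    refine Prod.ext ?_ ?_ <;>
      simp only [map_add, map_neg, map_smul, mul_neg, neg_neg] <;>
      norm_num <;> simp only [csmul] <;> ring

end
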